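/- Let Δ = Δ_0 + Δ_1 + ⋯ + Δ_k be a Minkowski sum decomposition of a reflexive polytope Δ ⊂ ℝ^d into lattice polytopes. Define Δ̂_0 = Conv(Δ_0, Δ_1 + e_1, …, Δ_k + e_k), Δ̂_i = Δ̂_0 − e_i for i = 1,…,k, and Δ̃_i = Conv((Δ_i + e_i) ∪ {0}) for i = 0,…,k, all in ℝ^d ⊕ ℝ^k, where e_0 = −(e_1+⋯+e_k). Then the linear map φ* : ℝ^d ⊕ ℝ^k → ℝ^d ⊕ ℝ^k defined by φ*(n + Σ_{i=1}^k α_i e_i*) = (k+1)n + Σ_{i=1}^k α_i ((k+1)e_i* + e_0*) for n ∈ ℝ^d, where e_0* = −(e_1*+⋯+e_k*), maps the dual polytope (Δ̂_0 + Δ̂_1 + ⋯ + Δ̂_k)* bijectively onto (Δ̃_0 ⊎ Δ̃_1 ⊎ ⋯ ⊎ Δ̃_k)*. -/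

import Mathlib

open scoped Pointwise
open Set

noncomputable section

/-- The standard pairing on `ℝ^n`. -/
def pairing {n : ℕ} (x y : Fin n → ℝ) : ℝ := ∑ i, x i * y i

/-- A point of `ℝ^n` lying in the lattice `ℤ^n`. -/
def IsLatticePt {n : ℕ} (x : Fin n → ℝ) : Prop := ∀ i, ∃ z : ℤ, x i = (z : ℝ)

/-- A lattice polytope: the convex hull of finitely many lattice points. -/
def IsLatticePolytope {n : ℕ} (P : Set (Fin n → ℝ)) : Prop :=
  ∃ S : Set (Fin n → ℝ), S.Finite ∧ (∀ x ∈ S, IsLatticePt x) ∧ P = convexHull ℝ S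

/-- The dual polytope `P* = {y | ⟨x,y⟩ ≥ -1 ∀ x ∈ P}`. -/
def polarDual {n : ℕ} (P : Set (Fin n → ℝ)) : Set (Fin n → ℝ) :=
  {y | ∀ x ∈ P, -1 ≤ pairing x y}

/-- A reflexive polytope. -/
def IsReflexive {n : ℕ} (P : Set (Fin n → ℝ)) : Prop :=
  IsLatticePolytope P ∧ (0 : Fin n → ℝ) ∈ interior P ∧ IsLatticePolytope (polarDual P)

/-- `min⟨P, u⟩ = min_{x ∈ P} ⟨x, u⟩`. -/
def minPair {n : ℕ} (P : Set (Fin n → ℝ)) (u : Fin n → ℝ) : ℝ :=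
  sInf ((fun x => pairing x u) '' P)

/-- The real vector space `ℝ^d ⊕ ℝ^k`. -/
abbrev Vdk (d k : ℕ) := (Fin d → ℝ) × (Fin k → ℝ)

/-- The pairing on `ℝ^d ⊕ ℝ^k` (sum of the two standard pairings). -/
def pairingV {d k : ℕ} (x y : Vdk d k) : ℝ := pairing x.1 y.1 + pairing x.2 y.2

def IsLatticePtV {d k : ℕ} (x : Vdk d k) : Prop := IsLatticePt x.1 ∧ IsLatticePt x.2

def IsLatticePolytopeV {d k : ℕ} (P : Set (Vdk d k)) : Prop :=
  ∃ S : Set (Vdk d k), S.Finite ∧ (∀ x ∈ S, IsLatticePtV x) ∧ P = convexHull ℝ S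

def polarDualV {d k : ℕ} (P : Set (Vdk d k)) : Set (Vdk d k) :=
  {y | ∀ x ∈ P, -1 ≤ pairingV x y}

def IsReflexiveV {d k : ℕ} (P : Set (Vdk d k)) : Prop :=
  IsLatticePolytopeV P ∧ (0 : Vdk d k) ∈ interior P ∧ IsLatticePolytopeV (polarDualV P)

/-- The Cayley cone `σ̄ = {(t₀Δ₀ + ⋯ + t_kΔ_k, t₀, …, t_k) : tᵢ ≥ 0} ⊆ ℝ^d ⊕ ℝ^{k+1}`. -/
def cayleyCone {d k : ℕ} (Δ : Fin (k+1) → Set (Fin d → ℝ)) : Set (Vdk d (k+1)) :=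
  {p | (∀ i, 0 ≤ p.2 i) ∧ p.1 ∈ ∑ i, p.2 i • Δ i}

/-- The dual cone of a cone in `ℝ^d ⊕ ℝ^k`. -/
def dualConeV {d k : ℕ} (σ : Set (Vdk d k)) : Set (Vdk d k) :=
  {y | ∀ x ∈ σ, 0 ≤ pairingV x y}

/-- `e₀ = −(e₁ + ⋯ + e_k)`, `eᵢ` the standard basis of the second factor `ℝ^k`. -/
def evec {k : ℕ} : Fin (k+1) → Fin k → ℝ :=
  Fin.cases (fun _ => -1) (fun i => Pi.single i 1)

/-- The linear map `φ*(n + Σᵢ₌₁ᵏ αᵢeᵢ*) = (k+1)n + Σᵢ₌₁ᵏ αᵢ((k+1)eᵢ* + e₀*)`. -/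
def phiStar {d k : ℕ} : Vdk d k → Vdk d k :=
  fun p => (((k : ℝ) + 1) • p.1, fun j => ((k : ℝ) + 1) * p.2 j - ∑ i, p.2 i)

/-! ### Auxiliary material -/

/-- The pairing with a fixed `y`, as a linear map. -/
def pairLM {d k : ℕ} (y : Vdk d k) : Vdk d k →ₗ[ℝ] ℝ where
  toFun x := pairingV x y
  map_add' a b := by
    simp [pairingV, pairing, add_mul, Finset.sum_add_distrib]; ring
  map_smul' c a := by
    simp [pairingV, pairing, smul_eq_mul, mul_assoc, ← Finset.mul_sum, mul_add]

lemma pairing_neg_one {k : ℕ} (v : Fin k → ℝ) :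
    pairing (fun _ => (-1:ℝ)) v = -∑ j, v j := by
  simp [pairing]

lemma pairing_single {k : ℕ} (i : Fin k) (v : Fin k → ℝ) :
    pairing (Pi.single i 1) v = v i := by
  simp [pairing, Pi.single_apply, ite_mul]

lemma pairing_zero_left {n : ℕ} (v : Fin n → ℝ) : pairing (0 : Fin n → ℝ) v = 0 := by
  simp [pairing]

/-- A half-space bound on a set extends to its convex hull. -/
lemma hull_pair_le {d k : ℕ} (f : Vdk d k →ₗ[ℝ] ℝ) (c : ℝ) {S : Set (Vdk d k)}
    (h : ∀ x ∈ S, c ≤ f x) : ∀ x ∈ convexHull ℝ S, c ≤ f x := fun x hx =>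
  convexHull_min h (convex_halfSpace_ge f.isLinear c) hx

/-- The second component of the generators of `Q`. -/
def qvec {k : ℕ} : Fin (k+1) → Fin k → ℝ :=
  Fin.cases 0 (fun i => Pi.single i 1)

lemma evec_zero {k : ℕ} : evec (0 : Fin (k+1)) = fun _ => (-1:ℝ) := by simp [evec]
lemma evec_succ {k : ℕ} (i : Fin k) : evec i.succ = Pi.single i 1 := by simp [evec]
lemma qvec_zero {k : ℕ} : qvec (0 : Fin (k+1)) = 0 := by simp [qvec]
lemma qvec_succ {k : ℕ} (i : Fin k) : qvec i.succ = Pi.single i 1 := by simp [qvec]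

lemma sum_phiStar_snd {d k : ℕ} (y : Vdk d k) :
    ∑ j, (phiStar y).2 j = ∑ j, y.2 j := by
  simp only [phiStar, Finset.sum_sub_distrib, Finset.sum_const, Finset.card_univ,
    Fintype.card_fin, ← Finset.mul_sum, nsmul_eq_mul]
  ring

lemma pair_phiStar {d k : ℕ} (y : Vdk d k) (x : Fin d → ℝ) (i : Fin (k+1)) :
    pairingV (x, evec i) (phiStar y)
      = ((k:ℝ)+1) * pairingV (x, qvec i) y - ∑ j, y.2 j := by
  have hfst : pairing x (phiStar y).1 = ((k:ℝ)+1) * pairing x y.1 := by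
    simp only [phiStar, pairing, Pi.smul_apply, smul_eq_mul, Finset.mul_sum]
    exact Finset.sum_congr rfl fun _ _ => by ring
  induction i using Fin.cases with
  | zero =>
      have h2 : pairing (evec (0 : Fin (k+1))) (phiStar y).2 = -∑ j, y.2 j := by
        rw [evec_zero, pairing_neg_one, sum_phiStar_snd]
      simp only [pairingV, hfst, h2, qvec_zero, pairing_zero_left]
      ring
  | succ i =>
      have h2 : pairing (evec i.succ) (phiStar y).2
          = ((k:ℝ)+1) * y.2 i - ∑ j, y.2 j := by
        rw [evec_succ, pairing_single]
        simp [phiStar]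
      have h3 : pairing (qvec i.succ) y.2 = y.2 i := by
        rw [qvec_succ, pairing_single]
      simp only [pairingV, hfst, h2, h3]
      ring

/-- The inverse of `phiStar`. -/
def psiStar {d k : ℕ} : Vdk d k → Vdk d k :=
  fun p => ((((k:ℝ)+1)⁻¹) • p.1, fun j => (p.2 j + ∑ i, p.2 i) / ((k:ℝ)+1))

lemma kne {k : ℕ} : ((k:ℝ)+1) ≠ 0 := by positivity

lemma phiStar_psiStar {d k : ℕ} (z : Vdk d k) : phiStar (psiStar z) = z := by
  have hT : ∑ i, (psiStar (d := d) z).2 i = ∑ i, z.2 i := by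
    simp only [psiStar, div_eq_mul_inv, ← Finset.sum_mul, Finset.sum_add_distrib,
      Finset.sum_const, Finset.card_univ, Fintype.card_fin, nsmul_eq_mul]
    field_simp
    ring
  refine Prod.ext ?_ ?_
  · show ((k:ℝ)+1) • (((k:ℝ)+1)⁻¹ • z.1) = z.1
    rw [smul_smul, mul_inv_cancel₀ kne, one_smul]
  · funext j
    show ((k:ℝ)+1) * ((z.2 j + ∑ i, z.2 i) / ((k:ℝ)+1)) - ∑ i, (psiStar (d := d) z).2 i = z.2 j
    rw [hT, mul_div_cancel₀ _ kne]
    ring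

lemma psiStar_phiStar {d k : ℕ} (y : Vdk d k) : psiStar (phiStar y) = y := by
  refine Prod.ext ?_ ?_
  · show (((k:ℝ)+1)⁻¹) • (((k:ℝ)+1) • y.1) = y.1
    rw [smul_smul, inv_mul_cancel₀ kne, one_smul]
  · funext j
    show ((phiStar y).2 j + ∑ i, (phiStar (d := d) y).2 i) / ((k:ℝ)+1) = y.2 j
    rw [sum_phiStar_snd]
    show (((k:ℝ)+1) * y.2 j - ∑ i, y.2 i + ∑ i, y.2 i) / ((k:ℝ)+1) = y.2 j
    field_simp
    ring

/-- `φ*` maps `(Δ̂₀ + Δ̂₁ + ⋯ + Δ̂_k)*` bijectively onto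
`(Δ̃₀ ⊎ Δ̃₁ ⊎ ⋯ ⊎ Δ̃_k)*`. -/
theorem phiStar_maps_dual_hat_to_dual_tilde {d k : ℕ}
    (Δ : Fin (k+1) → Set (Fin d → ℝ))
    (hlat : ∀ i, IsLatticePolytope (Δ i))
    (hrefl : IsReflexive (∑ i, Δ i))
    -- Δ̂₀ = Conv(Δ₀, Δ₁ + e₁, …, Δ_k + e_k)
    (Q : Set (Vdk d k))
    (hQ : Q = convexHull ℝ ((fun x => ((x, 0) : Vdk d k)) '' Δ 0 ∪
        ⋃ i : Fin k, (fun x => ((x, Pi.single i 1) : Vdk d k)) '' Δ i.succ))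
    -- Δ̂ᵢ = Δ̂₀ − eᵢ for i = 1, …, k
    (Δhat : Fin (k+1) → Set (Vdk d k))
    (hΔhat : Δhat = Fin.cases Q
        (fun i => (fun y => y - (((0 : Fin d → ℝ), Pi.single i 1) : Vdk d k)) '' Q))
    -- Δ̃ᵢ = Conv((Δᵢ + eᵢ) ∪ {0}) for i = 0, …, k
    (Δtilde : Fin (k+1) → Set (Vdk d k))
    (hΔtilde : Δtilde = fun i =>
        convexHull ℝ ((fun x => ((x, evec i) : Vdk d k)) '' Δ i ∪ {0})) :
    Set.BijOn (phiStar (d := d) (k := k))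
      (polarDualV (∑ i, Δhat i))
      (polarDualV (convexHull ℝ (⋃ i, Δtilde i))) := by
  classical
  -- generators of Q lie in Q, and have the form (x, qvec i)
  have hgen : ∀ (i : Fin (k+1)), ∀ x ∈ Δ i, ((x, qvec i) : Vdk d k) ∈ Q := by
    intro i x hx
    rw [hQ]
    apply subset_convexHull
    induction i using Fin.cases with
    | zero =>
        left
        exact ⟨x, hx, by rw [qvec_zero]⟩
    | succ i =>
        right
        refine mem_iUnion.mpr ⟨i, ⟨x, hx, ?_⟩⟩
        rw [qvec_succ]
  -- pairing with elements of the shifted copies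
  have hsub : ∀ (y q : Vdk d k) (i : Fin k),
      pairingV (q - (((0 : Fin d → ℝ), Pi.single i 1) : Vdk d k)) y
        = pairingV q y - y.2 i := by
    intro y q i
    have := map_sub (pairLM y) q (((0 : Fin d → ℝ), Pi.single i 1) : Vdk d k)
    have h0 : pairingV (((0 : Fin d → ℝ), Pi.single i 1) : Vdk d k) y = y.2 i := by
      simp [pairingV, pairing_zero_left, pairing_single]
    calc pairingV (q - (((0 : Fin d → ℝ), Pi.single i 1) : Vdk d k)) y
        = pairingV q y - pairingV (((0 : Fin d → ℝ), Pi.single i 1) : Vdk d k) y := this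
      _ = pairingV q y - y.2 i := by rw [h0]
  -- Key equivalence: y ∈ hat-dual ↔ φ*(y) ∈ tilde-dual
  have key : ∀ y : Vdk d k,
      y ∈ polarDualV (∑ i, Δhat i)
        ↔ phiStar y ∈ polarDualV (convexHull ℝ (⋃ i, Δtilde i)) := by
    intro y
    set T : ℝ := ∑ j, y.2 j with hT
    -- intermediate condition C
    constructor
    · -- forward direction
      intro hy
      have hC : ∀ q ∈ Q, T - 1 ≤ ((k:ℝ)+1) * pairingV q y := by
        intro q hq
        set g : Fin (k+1) → Vdk d k :=
          Fin.cases q (fun i => q - (((0 : Fin d → ℝ), Pi.single i 1) : Vdk d k)) with hg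
        have hmem : (∑ i, g i) ∈ ∑ i, Δhat i := by
          apply Set.finset_sum_mem_finset_sum
          intro i _
          rw [hΔhat]
          induction i using Fin.cases with
          | zero => simpa [hg] using hq
          | succ i =>
              simp only [Fin.cases_succ, hg]
              exact ⟨q, hq, rfl⟩
        have hle := hy _ hmem
        have hval : pairingV (∑ i, g i) y = ((k:ℝ)+1) * pairingV q y - T := by
          have hmap : pairingV (∑ i, g i) y = ∑ i, pairingV (g i) y :=
            map_sum (pairLM y) g Finset.univ
          rw [hmap, Fin.sum_univ_succ]
          have h0 : pairingV (g 0) y = pairingV q y := by simp [hg]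
          have hs : ∀ i : Fin k, pairingV (g i.succ) y = pairingV q y - y.2 i := by
            intro i
            have hgi : g i.succ = q - (((0 : Fin d → ℝ), Pi.single i 1) : Vdk d k) := by
              simp [hg]
            rw [hgi]
            exact hsub y q i
          rw [h0]
          simp only [hs]
          rw [Finset.sum_sub_distrib, Finset.sum_const, Finset.card_univ, Fintype.card_fin,
            nsmul_eq_mul, ← hT]
          ring
        rw [hval] at hle
        linarith
      -- now conclude membership in tilde-dual
      intro w hw
      refine hull_pair_le (pairLM (phiStar y)) (-1) ?_ w hw
      intro w' hw'
      obtain ⟨i, hi⟩ := mem_iUnion.mp hw'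
      rw [hΔtilde] at hi
      refine hull_pair_le (pairLM (phiStar y)) (-1) ?_ w' hi
      rintro w'' (⟨x, hx, rfl⟩ | hw0)
      · show -1 ≤ pairingV (x, evec i) (phiStar y)
        rw [pair_phiStar, ← hT]
        have := hC _ (hgen i x hx)
        linarith
      · rw [mem_singleton_iff.mp hw0]
        show -1 ≤ pairingV 0 (phiStar y)
        rw [show pairingV (0 : Vdk d k) (phiStar y) = 0 from map_zero (pairLM (phiStar y))]
        norm_num
    · -- reverse direction
      intro hz
      have hC : ∀ q ∈ Q, T - 1 ≤ ((k:ℝ)+1) * pairingV q y := by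
        rw [hQ]
        refine hull_pair_le (((k:ℝ)+1) • pairLM y) (T - 1) ?_
        rintro q (⟨x, hx, rfl⟩ | hq)
        · have hmem : ((x, evec (0 : Fin (k+1))) : Vdk d k)
              ∈ convexHull ℝ (⋃ i, Δtilde i) := by
            apply subset_convexHull
            refine mem_iUnion.mpr ⟨0, ?_⟩
            rw [hΔtilde]
            exact subset_convexHull ℝ _ (Or.inl ⟨x, hx, rfl⟩)
          have := hz _ hmem
          rw [pair_phiStar, ← hT] at this
          show T - 1 ≤ ((k:ℝ)+1) • pairingV ((x, (0 : Fin k → ℝ)) : Vdk d k) y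
          rw [smul_eq_mul]
          rw [show ((0 : Fin k → ℝ)) = qvec (0 : Fin (k+1)) from qvec_zero.symm]
          linarith
        · obtain ⟨i, x, hx, rfl⟩ := by
            simpa only [mem_iUnion] using hq
          have hmem : ((x, evec i.succ) : Vdk d k)
              ∈ convexHull ℝ (⋃ j, Δtilde j) := by
            apply subset_convexHull
            refine mem_iUnion.mpr ⟨i.succ, ?_⟩
            rw [hΔtilde]
            exact subset_convexHull ℝ _ (Or.inl ⟨x, hx, rfl⟩)
          have := hz _ hmem
          rw [pair_phiStar, ← hT] at this
          show T - 1 ≤ ((k:ℝ)+1) • pairingV ((x, Pi.single i 1) : Vdk d k) y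
          rw [smul_eq_mul]
          rw [show (Pi.single i (1:ℝ)) = qvec i.succ from (qvec_succ i).symm]
          linarith
      intro x hx
      obtain ⟨g, hgmem, rfl⟩ := (Set.mem_fintype_sum _ _).mp hx
      set c : ℝ := (T - 1) / ((k:ℝ)+1) with hc
      have hck : c * ((k:ℝ)+1) = T - 1 := div_mul_cancel₀ _ kne
      have hbound : ∀ q ∈ Q, c ≤ pairingV q y := by
        intro q hq
        have := hC q hq
        rw [hc, div_le_iff₀ (by positivity : (0:ℝ) < (k:ℝ)+1)]
        linarith
      have h0 : c ≤ pairingV (g 0) y := by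
        apply hbound
        have := hgmem (0 : Fin (k+1))
        simpa only [hΔhat, Fin.cases_zero] using this
      have hs : ∀ i : Fin k, c - y.2 i ≤ pairingV (g i.succ) y := by
        intro i
        have := hgmem i.succ
        simp only [hΔhat, Fin.cases_succ] at this
        obtain ⟨q, hq, hEq⟩ := this
        rw [← hEq, hsub y q i]
        have := hbound q hq
        linarith
      have hmap : pairingV (∑ i, g i) y = ∑ i, pairingV (g i) y :=
        map_sum (pairLM y) g Finset.univ
      rw [hmap, Fin.sum_univ_succ]
      have hsumle : ∑ i : Fin k, (c - y.2 i) ≤ ∑ i : Fin k, pairingV (g i.succ) y :=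
        Finset.sum_le_sum (fun i _ => hs i)
      have hsumeq : ∑ i : Fin k, (c - y.2 i) = (k:ℝ) * c - T := by
        rw [Finset.sum_sub_distrib, Finset.sum_const, Finset.card_univ, Fintype.card_fin,
          nsmul_eq_mul, ← hT]
      rw [hsumeq] at hsumle
      have : c + ((k:ℝ) * c - T) = -1 := by
        have : c * ((k:ℝ)+1) = T - 1 := hck
        nlinarith [hck]
      linarith
  -- assemble the bijection
  refine ⟨fun y hy => (key y).mp hy, ?_, ?_⟩
  · exact (Function.LeftInverse.injective
      (psiStar_phiStar (d := d) (k := k))).injOn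
  · intro z hz
    refine ⟨psiStar z, (key (psiStar z)).mpr ?_, phiStar_psiStar z⟩
    rw [phiStar_psiStar]
    exact hz
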